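/- Let {qₙ}ₙ ⊆ ℕ be an infinite set of positive integers and R : ℕ → (0, ∞) a positive function. Then the set 𝒜 of α ∈ [0,1) such that for infinitely many n, α has a continued-fraction convergent p/qₙ (with denominator exactly qₙ) satisfying |α − p/qₙ| < R(qₙ), is residual (comeager) in [0,1). -/

import Mathlib

open Filter Finset ArithmeticFunction

private def cc : ℕ → ℕ := fun p => if p = 2 then 8 else if p = 3 then 3 else if p = 5 then 2 else 1

private lemma keyG : ∀ q : ℕ, q * 4 ^ q.primeFactors.card ≤ q.totient ^ 2 * ∏ p ∈ q.primeFactors, cc p := by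
  intro q
  induction q using Nat.recOnPosPrimePosCoprime with
  | zero => simp
  | one => simp
  | prime_pow p n hp hn =>
    have hp' : Nat.Prime p := hp
    rw [Nat.primeFactors_pow p hn.ne', hp'.primeFactors, Nat.totient_prime_pow hp' hn]
    simp only [Finset.card_singleton, pow_one, Finset.prod_singleton]
    obtain ⟨m, rfl⟩ : ∃ m, n = m + 1 := ⟨n - 1, by omega⟩
    simp only [Nat.add_sub_cancel]
    by_cases h2 : p = 2
    · subst h2
      have h1 : 1 ≤ 2 ^ m := Nat.one_le_two_pow
      simp only [cc]
      norm_num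
      calc 2 ^ (m+1) * 4 = 2 ^ m * 8 := by ring
        _ ≤ (2 ^ m * 2 ^ m) * 8 := by nlinarith
        _ = (2 ^ m) ^ 2 * 8 := by ring
    · by_cases h3 : p = 3
      · subst h3
        have h1 : 1 ≤ 3 ^ m := Nat.one_le_pow _ _ (by norm_num)
        simp only [cc]
        norm_num
        calc 3 ^ (m+1) * 4 = 3 ^ m * 12 := by ring
          _ ≤ (3 ^ m * 3 ^ m) * 12 := by nlinarith
          _ = (3 ^ m * 2) ^ 2 * 3 := by ring
      · by_cases h5 : p = 5
        · subst h5
          have h1 : 1 ≤ 5 ^ m := Nat.one_le_pow _ _ (by norm_num)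
          simp only [cc]
          norm_num
          calc 5 ^ (m+1) * 4 = 5 ^ m * 20 := by ring
            _ ≤ (5 ^ m * 5 ^ m) * 32 := by nlinarith
            _ = (5 ^ m * 4) ^ 2 * 2 := by ring
        · have hge : 7 ≤ p := by
            by_contra hlt
            push_neg at hlt
            have := hp'.two_le
            interval_cases p <;> simp_all (config := {decide := true})
          simp only [cc, if_neg h2, if_neg h3, if_neg h5, mul_one]
          obtain ⟨r, rfl⟩ : ∃ r, p = r + 1 := ⟨p - 1, by omega⟩
          have hr : 6 ≤ r := by omega
          have hP : 1 ≤ (r+1) ^ m := Nat.one_le_pow _ _ (by omega)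
          have hsq : 4 * (r + 1) ≤ r ^ 2 := by nlinarith
          simp only [Nat.add_sub_cancel]
          calc (r+1) ^ (m+1) * 4 = ((r+1) ^ m) * (4 * (r+1)) := by ring
            _ ≤ ((r+1) ^ m) * r ^ 2 := Nat.mul_le_mul_left _ hsq
            _ ≤ (((r+1) ^ m) * ((r+1) ^ m)) * r ^ 2 := by
                  exact Nat.mul_le_mul_right _ (Nat.le_mul_of_pos_left _ hP)
            _ = ((r+1) ^ m * r) ^ 2 := by ring
  | coprime a b ha hb hab iha ihb =>
    rw [hab.primeFactors_mul, Finset.card_union_of_disjoint hab.disjoint_primeFactors,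
      Finset.prod_union hab.disjoint_primeFactors, Nat.totient_mul hab, pow_add]
    calc a * b * (4 ^ a.primeFactors.card * 4 ^ b.primeFactors.card)
        = (a * 4 ^ a.primeFactors.card) * (b * 4 ^ b.primeFactors.card) := by ring
      _ ≤ (a.totient ^ 2 * ∏ p ∈ a.primeFactors, cc p) *
          (b.totient ^ 2 * ∏ p ∈ b.primeFactors, cc p) := Nat.mul_le_mul iha ihb
      _ = (a.totient * b.totient) ^ 2 *
          ((∏ p ∈ a.primeFactors, cc p) * ∏ p ∈ b.primeFactors, cc p) := by ring

private lemma key2 (q : ℕ) : q * 4 ^ q.primeFactors.card ≤ 48 * q.totient ^ 2 := by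
  refine (keyG q).trans ?_
  have h1 : ∏ p ∈ q.primeFactors, cc p = ∏ p ∈ q.primeFactors ∩ {2,3,5}, cc p := by
    refine (Finset.prod_subset Finset.inter_subset_left ?_).symm
    intro x hx hx'
    have : x ∉ ({2,3,5} : Finset ℕ) := fun h => hx' (Finset.mem_inter.mpr ⟨hx, h⟩)
    simp only [Finset.mem_insert, Finset.mem_singleton] at this
    push_neg at this
    simp [cc, this.1, this.2.1, this.2.2]
  have h2 : ∏ p ∈ q.primeFactors ∩ {2,3,5}, cc p ∣ ∏ p ∈ ({2,3,5} : Finset ℕ), cc p :=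
    Finset.prod_dvd_prod_of_subset _ _ _ Finset.inter_subset_right
  have h3 : ∏ p ∈ ({2,3,5} : Finset ℕ), cc p = 48 := by decide
  have h4 : ∏ p ∈ q.primeFactors, cc p ≤ 48 := by
    rw [h1]
    exact (Nat.le_of_dvd (by norm_num) (h3 ▸ h2))
  calc q.totient ^ 2 * ∏ p ∈ q.primeFactors, cc p ≤ q.totient ^ 2 * 48 :=
        Nat.mul_le_mul_left _ h4
    _ = 48 * q.totient ^ 2 := by ring

private lemma card_dvd_Ioc (A B d : ℕ) (h : A ≤ B) :
    #{p ∈ Finset.Ioc A B | d ∣ p} = B / d - A / d := by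
  have hu : Finset.Ioc 0 A ∪ Finset.Ioc A B = Finset.Ioc 0 B :=
    Finset.Ioc_union_Ioc_eq_Ioc (Nat.zero_le A) h
  have hdisj : Disjoint (Finset.Ioc 0 A) (Finset.Ioc A B) := by
    rw [Finset.disjoint_left]
    intro x hx hx'
    simp only [Finset.mem_Ioc] at hx hx'
    omega
  have h1 := Nat.Ioc_filter_dvd_card_eq_div B d
  have h2 := Nat.Ioc_filter_dvd_card_eq_div A d
  rw [← hu, Finset.filter_union, Finset.card_union_of_disjoint
    (hdisj.mono (Finset.filter_subset _ _) (Finset.filter_subset _ _))] at h1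
  omega

private lemma count_eq (q A B : ℕ) (hq : 0 < q) (hAB : A ≤ B) :
    (#{p ∈ Finset.Ioc A B | p.Coprime q} : ℤ) =
      ∑ d ∈ q.divisors, moebius d * ((B / d : ℕ) - ((A / d : ℕ) : ℤ)) := by
  have step1 : ∀ p ∈ Finset.Ioc A B,
      (if p.Coprime q then (1:ℤ) else 0) = ∑ d ∈ q.divisors with d ∣ p, moebius d := by
    intro p hp
    have hg : p.gcd q ≠ 0 := Nat.gcd_ne_zero_right hq.ne'
    have hset : {d ∈ q.divisors | d ∣ p} = (p.gcd q).divisors := by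
      ext d
      simp only [Finset.mem_filter, Nat.mem_divisors, Nat.dvd_gcd_iff, hq.ne', hg,
        ne_eq, not_false_eq_true, and_true]
      tauto
    rw [hset]
    have := congrArg (fun f : ArithmeticFunction ℤ => f (p.gcd q)) moebius_mul_coe_zeta
    simp only [coe_mul_zeta_apply, one_apply] at this
    rw [this]
  calc (#{p ∈ Finset.Ioc A B | p.Coprime q} : ℤ)
      = ∑ p ∈ Finset.Ioc A B, (if p.Coprime q then (1:ℤ) else 0) := by
        rw [Finset.card_filter, Nat.cast_sum]
        exact Finset.sum_congr rfl fun p _ => by split_ifs <;> simp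
    _ = ∑ p ∈ Finset.Ioc A B, ∑ d ∈ q.divisors with d ∣ p, moebius d :=
        Finset.sum_congr rfl step1
    _ = ∑ p ∈ Finset.Ioc A B, ∑ d ∈ q.divisors, if d ∣ p then moebius d else 0 := by
        simp_rw [Finset.sum_filter]
    _ = ∑ d ∈ q.divisors, ∑ p ∈ Finset.Ioc A B, if d ∣ p then moebius d else 0 :=
        Finset.sum_comm
    _ = ∑ d ∈ q.divisors, moebius d * ((B / d : ℕ) - ((A / d : ℕ) : ℤ)) := by
        refine Finset.sum_congr rfl fun d _ => ?_
        rw [← Finset.sum_filter, Finset.sum_const, card_dvd_Ioc A B d hAB, nsmul_eq_mul,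
          Nat.cast_sub (Nat.div_le_div_right hAB)]
        ring

private lemma sum_moebius_div (q : ℕ) (hq : 0 < q) :
    ∑ d ∈ q.divisors, (moebius d : ℝ) / d = q.totient / q := by
  have hinv := (sum_eq_iff_sum_mul_moebius_eq (R := ℝ)
      (f := fun n => (n.totient : ℝ)) (g := fun n => (n : ℝ))).mp
    (fun n _ => by exact_mod_cast Nat.sum_totient n) q hq
  rw [Nat.sum_divisorsAntidiagonal (f := fun d e => (moebius d : ℝ) * e)] at hinv
  rw [eq_div_iff (by exact_mod_cast hq.ne' : (q:ℝ) ≠ 0), ← hinv, Finset.sum_mul]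
  refine Finset.sum_congr rfl fun d hd => ?_
  obtain ⟨hdvd, -⟩ := Nat.mem_divisors.mp hd
  have hd0 : (d:ℝ) ≠ 0 := by
    have := Nat.pos_of_mem_divisors hd
    positivity
  rw [Nat.cast_div hdvd hd0]
  field_simp

private lemma sum_abs_moebius (q : ℕ) (hq : 0 < q) :
    ∑ d ∈ q.divisors, |(moebius d : ℝ)| = 2 ^ q.primeFactors.card := by
  have h1 : ∑ d ∈ q.divisors, |(moebius d : ℝ)| =
      ∑ d ∈ q.divisors with Squarefree d, (1:ℝ) := by
    rw [Finset.sum_filter]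
    refine Finset.sum_congr rfl fun d _ => ?_
    have := abs_moebius (n := d)
    split_ifs with h
    · rw [← Int.cast_abs, this, if_pos h, Int.cast_one]
    · rw [← Int.cast_abs, this, if_neg h, Int.cast_zero]
  rw [h1, Nat.sum_divisors_filter_squarefree hq.ne']
  rw [Finset.sum_const, nsmul_eq_mul, mul_one, Finset.card_powerset]
  norm_num
  congr 1
  rw [UniqueFactorizationMonoid.primeFactors_eq_natPrimeFactors]

private lemma core (q A B : ℕ) (hq : 0 < q) (hAB : A ≤ B) :
    ((B:ℝ) - A) * (q.totient / q) - 2 ^ q.primeFactors.card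
      ≤ (#{p ∈ Finset.Ioc A B | p.Coprime q} : ℝ) := by
  have hcast : (#{p ∈ Finset.Ioc A B | p.Coprime q} : ℝ) =
      ∑ d ∈ q.divisors, (moebius d : ℝ) * (((B / d : ℕ) : ℝ) - ((A / d : ℕ) : ℝ)) := by
    have := congrArg (fun z : ℤ => (z : ℝ)) (count_eq q A B hq hAB)
    push_cast at this
    exact this
  rw [hcast]
  have hterm : ∀ d ∈ q.divisors,
      (moebius d : ℝ) * (((B:ℝ) - A)/d) - |(moebius d : ℝ)| ≤
      (moebius d : ℝ) * (((B / d : ℕ) : ℝ) - ((A / d : ℕ) : ℝ)) := by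
    intro d hd
    have hd0 : 0 < d := Nat.pos_of_mem_divisors hd
    have hd0R : (0:ℝ) < d := by exact_mod_cast hd0
    set ν : ℝ := ((B / d : ℕ) : ℝ) - ((A / d : ℕ) : ℝ) with hν
    set c : ℝ := ((B:ℝ) - A)/d with hc
    have hB1 : ((B / d : ℕ) : ℝ) ≤ (B:ℝ)/d := Nat.cast_div_le
    have hA1 : ((A / d : ℕ) : ℝ) ≤ (A:ℝ)/d := Nat.cast_div_le
    have hB2 : (B:ℝ)/d - 1 ≤ ((B / d : ℕ) : ℝ) := by
      have h1 := Nat.div_add_mod B d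
      have h2 := Nat.mod_lt B hd0
      have : (B:ℝ) < d * ((B / d : ℕ) : ℝ) + d := by exact_mod_cast by omega
      rw [sub_le_iff_le_add, div_le_iff₀ hd0R]
      nlinarith
    have hA2 : (A:ℝ)/d - 1 ≤ ((A / d : ℕ) : ℝ) := by
      have h1 := Nat.div_add_mod A d
      have h2 := Nat.mod_lt A hd0
      have : (A:ℝ) < d * ((A / d : ℕ) : ℝ) + d := by exact_mod_cast by omega
      rw [sub_le_iff_le_add, div_le_iff₀ hd0R]
      nlinarith
    have habs : |ν - c| ≤ 1 := by
      rw [abs_le]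
      rw [hν, hc, sub_div]
      constructor <;> linarith
    have h1 : -(|(moebius d : ℝ)| * |ν - c|) ≤ (moebius d : ℝ) * (ν - c) := by
      rw [← abs_mul]; exact neg_abs_le _
    have h2 : |(moebius d : ℝ)| * |ν - c| ≤ |(moebius d : ℝ)| :=
      (mul_le_mul_of_nonneg_left habs (abs_nonneg _)).trans_eq (mul_one _)
    nlinarith [mul_sub (moebius d : ℝ) ν c]
  calc ((B:ℝ) - A) * (q.totient / q) - 2 ^ q.primeFactors.card
      = ∑ d ∈ q.divisors, (moebius d : ℝ) * (((B:ℝ) - A)/d)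
        - ∑ d ∈ q.divisors, |(moebius d : ℝ)| := by
        rw [sum_abs_moebius q hq, ← sum_moebius_div q hq, Finset.mul_sum]
        congr 1
        exact Finset.sum_congr rfl fun d _ => by ring
    _ = ∑ d ∈ q.divisors,
        ((moebius d : ℝ) * (((B:ℝ) - A)/d) - |(moebius d : ℝ)|) := by
        rw [Finset.sum_sub_distrib]
    _ ≤ _ := Finset.sum_le_sum hterm

private lemma exists_frac (δ : ℝ) (hδ : 0 < δ) :
    ∃ Q : ℕ, ∀ q : ℕ, Q ≤ q → ∀ a b : ℝ, 0 ≤ a → b - a = δ →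
      ∃ p : ℕ, Nat.Coprime p q ∧ a < (p:ℝ)/q ∧ (p:ℝ)/q < b := by
  refine ⟨⌈max ((42/δ)^2) (2/δ)⌉₊ + 1, fun q hQ a b ha hab => ?_⟩
  have hq0 : 0 < q := by omega
  have hqR : (0:ℝ) < q := by exact_mod_cast hq0
  have hqmax : max ((42/δ)^2) (2/δ) ≤ (q:ℝ) := by
    refine (Nat.le_ceil _).trans ?_
    exact_mod_cast Nat.le_of_succ_le hQ
  have h42 : 42/δ ≤ Real.sqrt q := by
    rw [show (42:ℝ)/δ = Real.sqrt ((42/δ)^2) by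
      rw [Real.sqrt_sq (by positivity)]]
    exact Real.sqrt_le_sqrt ((le_max_left _ _).trans hqmax)
  have h2q : 2 ≤ δ * q := by
    have := (le_max_right ((42/δ)^2) (2/δ)).trans hqmax
    rw [div_le_iff₀ hδ] at this
    linarith
  -- totient facts
  have hφ0 : 0 < q.totient := Nat.totient_pos.mpr hq0
  have hφR : (0:ℝ) < q.totient := by exact_mod_cast hφ0
  have hφq : (q.totient : ℝ) ≤ q := by exact_mod_cast Nat.totient_le q
  -- 2^ω ≤ 7 φ / √q
  have hpow : (2:ℝ) ^ q.primeFactors.card * Real.sqrt q ≤ 7 * q.totient := by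
    have hk : (q:ℝ) * 4 ^ q.primeFactors.card ≤ 49 * (q.totient:ℝ)^2 := by
      have := key2 q
      have : ((q * 4 ^ q.primeFactors.card : ℕ) : ℝ) ≤ ((48 * q.totient ^ 2 : ℕ) : ℝ) := by
        exact_mod_cast this
      push_cast at this
      nlinarith
    have hs := Real.sqrt_le_sqrt hk
    rw [Real.sqrt_mul (le_of_lt hqR)] at hs
    have e1 : Real.sqrt ((4:ℝ) ^ q.primeFactors.card) = 2 ^ q.primeFactors.card := by
      rw [show (4:ℝ) ^ q.primeFactors.card = ((2:ℝ) ^ q.primeFactors.card)^2 by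
        rw [← pow_mul, mul_comm, pow_mul]; norm_num]
      exact Real.sqrt_sq (by positivity)
    have e2 : Real.sqrt (49 * (q.totient:ℝ)^2) = 7 * q.totient := by
      rw [show (49:ℝ) * (q.totient:ℝ)^2 = (7 * (q.totient:ℝ))^2 by ring]
      exact Real.sqrt_sq (by positivity)
    rw [e1, e2] at hs
    linarith [hs]
  have hsq0 : 0 < Real.sqrt q := Real.sqrt_pos.mpr hqR
  have hcrit : (2:ℝ) ^ q.primeFactors.card + 2 ≤ δ * q.totient / 2 := by
    have h1 : (1:ℝ) ≤ 2 ^ q.primeFactors.card := one_le_pow₀ (by norm_num)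
    have h2 : (2:ℝ) ^ q.primeFactors.card ≤ 7 * q.totient / Real.sqrt q := by
      rw [le_div_iff₀ hsq0]; linarith
    have h3 : 7 * (q.totient:ℝ) / Real.sqrt q ≤ 7 * q.totient / (42/δ) := by
      apply div_le_div_of_nonneg_left (by positivity) (by positivity) h42
    have h4 : 7 * (q.totient:ℝ) / (42/δ) = δ * q.totient / 6 := by
      field_simp; ring
    nlinarith [h2.trans (h3.trans_eq h4)]
  -- set up the interval of numerators
  set A := ⌈a * q⌉₊ with hA
  set B := ⌈b * q⌉₊ - 1 with hB
  have haq0 : (0:ℝ) ≤ a * q := by positivity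
  have hbq : b * q = a * q + δ * q := by rw [show b = a + δ by linarith]; ring
  have hbq2 : (2:ℝ) ≤ b * q := by linarith
  have hceilb1 : 1 ≤ ⌈b * q⌉₊ := by
    have : (1:ℝ) ≤ ⌈b * q⌉₊ := le_trans (by norm_num) (hbq2.trans (Nat.le_ceil _))
    exact_mod_cast this
  have hBR : (B:ℝ) = (⌈b * q⌉₊ : ℝ) - 1 := by
    rw [hB, Nat.cast_sub hceilb1, Nat.cast_one]
  have hAle : a * q ≤ (A:ℝ) := Nat.le_ceil _
  have hAlt : (A:ℝ) < a * q + 1 := Nat.ceil_lt_add_one haq0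
  have hbq0 : (0:ℝ) ≤ b * q := by linarith
  have hBge : b * q - 1 ≤ (B:ℝ) := by
    rw [hBR]; linarith [Nat.le_ceil (b*q)]
  have hBlt : (B:ℝ) < b * q := by
    rw [hBR]; linarith [Nat.ceil_lt_add_one hbq0]
  have hABn : A ≤ B := by
    have hlt : ((A + 1 : ℕ):ℝ) < (⌈b*q⌉₊:ℝ) := by
      push_cast
      linarith [Nat.le_ceil (b*q)]
    have := Nat.cast_lt.mp hlt
    omega
  have hcard := core q A B hq0 hABn
  have hBA : δ * q - 2 ≤ (B:ℝ) - A := by linarith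
  have hfrac1 : (q.totient:ℝ)/q ≤ 1 := by
    rw [div_le_one hqR]; exact hφq
  have hfrac0 : (0:ℝ) ≤ (q.totient:ℝ)/q := by positivity
  have hmul : (δ * q - 2) * ((q.totient:ℝ)/q) = δ * q.totient - 2 * ((q.totient:ℝ)/q) := by
    field_simp
  have hδq2 : (0:ℝ) ≤ δ * q - 2 := by linarith
  have hstep : δ * q.totient - 2 - 2 ^ q.primeFactors.card
      ≤ (#{p ∈ Finset.Ioc A B | p.Coprime q} : ℝ) := by
    have h1 : (δ * q - 2) * ((q.totient:ℝ)/q) ≤ ((B:ℝ) - A) * ((q.totient:ℝ)/q) :=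
      mul_le_mul_of_nonneg_right hBA hfrac0
    have h2 : 2 * ((q.totient:ℝ)/q) ≤ 2 := by linarith
    rw [hmul] at h1
    linarith
  have hpos : (0:ℝ) < (#{p ∈ Finset.Ioc A B | p.Coprime q} : ℝ) := by
    have : (2:ℝ) ^ q.primeFactors.card + 2 ≤ δ * q.totient / 2 := hcrit
    have hd2 : (0:ℝ) < δ * q.totient / 2 := by positivity
    linarith
  have hposn : 0 < #{p ∈ Finset.Ioc A B | p.Coprime q} := by exact_mod_cast hpos
  obtain ⟨p, hp⟩ := Finset.card_pos.mp hposn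
  rw [Finset.mem_filter, Finset.mem_Ioc] at hp
  obtain ⟨⟨hpA, hpB⟩, hpcop⟩ := hp
  have hpAR : (A:ℝ) < p := by exact_mod_cast hpA
  have hpBR : (p:ℝ) ≤ B := by exact_mod_cast hpB
  refine ⟨p, hpcop, ?_, ?_⟩
  · rw [lt_div_iff₀ hqR]
    linarith
  · rw [div_lt_iff₀ hqR]
    linarith

/-- Given an infinite set `{qₙ} ⊆ ℕ` and a positive function `R`, the set of
`α ∈ [0,1)` admitting, for infinitely many `n`, a (reduced) continued-fraction
convergent `p/qₙ` with `|α - p/qₙ| < R(qₙ)` is residual in `[0,1)`.  (A reduced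
fraction `p/q` with `|α - p/q| < 1/(2q²)` is automatically a convergent of `α`.) -/
theorem stmt6 (q : ℕ → ℕ) (hqinj : Function.Injective q) (hqpos : ∀ n, 0 < q n)
    (R : ℕ → ℝ) (hR : ∀ n, 0 < R n) :
    {α : Set.Ico (0 : ℝ) 1 | ∃ᶠ n in atTop, ∃ p : ℤ,
        Int.gcd p (q n) = 1 ∧
        |(α : ℝ) - (p : ℝ) / (q n : ℝ)| < min (R (q n)) (1 / (2 * (q n : ℝ) ^ 2))}
      ∈ residual (Set.Ico (0 : ℝ) 1) := by
  set P : ℕ → ℝ → Prop := fun n x => ∃ p : ℤ,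
      Int.gcd p (q n) = 1 ∧
      |x - (p : ℝ) / (q n : ℝ)| < min (R (q n)) (1 / (2 * (q n : ℝ) ^ 2)) with hP
  set U : ℕ → Set (Set.Ico (0:ℝ) 1) := fun N => {α | ∃ n, N ≤ n ∧ P n (α : ℝ)} with hU
  suffices h : ∀ N, U N ∈ residual (Set.Ico (0:ℝ) 1) by
    have hi : (⋂ N, U N) ∈ residual (Set.Ico (0:ℝ) 1) := countable_iInter_mem.mpr h
    refine Filter.mem_of_superset hi ?_
    intro α hα
    rw [Set.mem_iInter] at hα
    rw [Set.mem_setOf_eq, Filter.frequently_atTop]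
    intro N
    obtain ⟨n, hn, hp⟩ := hα N
    exact ⟨n, hn, hp⟩
  intro N
  apply residual_of_dense_open
  · -- openness
    have hUeq : U N = Subtype.val ⁻¹' (⋃ n ∈ {m : ℕ | N ≤ m}, {x : ℝ | P n x}) := by
      ext α
      simp only [hU, Set.mem_setOf_eq, Set.mem_preimage, Set.mem_iUnion]
      constructor
      · rintro ⟨n, hn, hp⟩; exact ⟨n, hn, hp⟩
      · rintro ⟨n, hn, hp⟩; exact ⟨n, hn, hp⟩
    rw [hUeq]
    apply IsOpen.preimage continuous_subtype_val
    apply isOpen_biUnion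
    intro n _
    have heq : {x : ℝ | P n x} = ⋃ p : ℤ, {x : ℝ | Int.gcd p (q n) = 1 ∧
        |x - (p : ℝ) / (q n : ℝ)| < min (R (q n)) (1 / (2 * (q n : ℝ) ^ 2))} := by
      ext x
      simp only [hP, Set.mem_setOf_eq, Set.mem_iUnion]
    rw [heq]
    apply isOpen_iUnion
    intro p
    by_cases hg : Int.gcd p (q n) = 1
    · have : {x : ℝ | Int.gcd p (q n) = 1 ∧
          |x - (p : ℝ) / (q n : ℝ)| < min (R (q n)) (1 / (2 * (q n : ℝ) ^ 2))} =
          Metric.ball ((p : ℝ) / (q n : ℝ)) (min (R (q n)) (1 / (2 * (q n : ℝ) ^ 2))) := by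
        ext x
        simp [Metric.mem_ball, Real.dist_eq, hg]
      rw [this]
      exact Metric.isOpen_ball
    · have : {x : ℝ | Int.gcd p (q n) = 1 ∧
          |x - (p : ℝ) / (q n : ℝ)| < min (R (q n)) (1 / (2 * (q n : ℝ) ^ 2))} = ∅ := by
        ext x; simp [hg]
      rw [this]
      exact isOpen_empty
  · -- density
    rw [Metric.dense_iff]
    rintro x ε hε
    obtain ⟨hx0, hx1⟩ := x.2
    set α : ℝ := (x : ℝ) with hα
    set t : ℝ := min ε (1 - α) / 4 with ht
    have ht0 : 0 < t := by
      rw [ht]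
      have : 0 < min ε (1 - α) := lt_min hε (by linarith)
      linarith
    have htε : t ≤ ε / 4 := by
      rw [ht]
      have := min_le_left ε (1 - α)
      linarith
    have htα : t ≤ (1 - α) / 4 := by
      rw [ht]
      have := min_le_right ε (1 - α)
      linarith
    obtain ⟨Q, hQ⟩ := exists_frac t ht0
    have htend : Filter.Tendsto q Filter.atTop Filter.atTop := by
      rw [← Nat.cofinite_eq_atTop]
      exact hqinj.tendsto_cofinite
    have h1 : ∀ᶠ n in atTop, Q ≤ q n := htend.eventually_ge_atTop Q
    have h2 : ∀ᶠ n in atTop, N ≤ n := eventually_ge_atTop N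
    obtain ⟨n, hn1, hn2⟩ := (h1.and h2).exists
    obtain ⟨p, hcop, hlt1, hlt2⟩ := hQ (q n) hn1 (α + t) (α + 2*t) (by linarith) (by ring)
    set β : ℝ := (p : ℝ) / (q n : ℝ) with hβ
    have hβ0 : 0 ≤ β := by linarith
    have hβ1 : β < 1 := by
      have : α + 2*t ≤ (1 + α) / 2 := by linarith
      linarith
    refine ⟨⟨β, hβ0, hβ1⟩, ?_, ?_⟩
    · rw [Metric.mem_ball, Subtype.dist_eq, Real.dist_eq]
      have : |β - α| = β - α := abs_of_pos (by linarith)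
      rw [this]
      linarith
    · show ∃ m, N ≤ m ∧ P m β
      refine ⟨n, hn2, (p : ℤ), ?_, ?_⟩
      · rw [Int.gcd_natCast_natCast]
        exact hcop
      · have hq0 : (0:ℝ) < q n := by exact_mod_cast hqpos n
        have : β - ((p:ℤ) : ℝ) / (q n : ℝ) = 0 := by
          rw [hβ]; push_cast; ring
        rw [this, abs_zero]
        exact lt_min (hR _) (by positivity)
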